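/- Let (W,H) be a critical point of the regularized objective f (in particular, any global minimizer). Assume N_m > 0 and N_m^j > 0 for every m ∈ {1,…,M} and j ∈ [K], and assume κ_m > 0 for every m. For each m fix any constant c_{1,m} > 0 and set γ_{1,m} = (1/(1+c_{1,m}))·m/(K−m), c_{2,m} = (c_{1,m} m/(c_{1,m}+1))·log(m) + (m c_{1,m}/(1+c_{1,m}))·log((c_{1,m}+1)/c_{1,m}) + (m/(c_{1,m}+1))·log((K−m)(c_{1,m}+1)), Γ₂ = (1/N) Σ_{m=1}^M N_m c_{2,m}, ρ = ‖W‖_F², and A_m = sqrt( (1/κ_m) · (m(K−m)/K) · [ 2K/N_m + (2K²/m²)·max_{|S|=m} Σ_{j∈S} 1/N_m^j ] ). Then g(WH) − Γ₂ ≥ −(1/N) Σ_{m=1}^M N_m γ_{1,m} A_m √(λ_W/λ_H) ρ. -/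

import Mathlib

open Finset

/-- Softmax probability of coordinate `k` for logits `z ∈ ℝ^K`. -/
noncomputable def softmax {K : ℕ} (z : Fin K → ℝ) (k : Fin K) : ℝ :=
  Real.exp (z k) / ∑ j, Real.exp (z j)

/-- Pick-all-labels (PAL) loss: `L_PAL(z,S) = ∑_{k∈S} -log(softmax(z)_k)`. -/
noncomputable def palLoss {K : ℕ} (z : Fin K → ℝ) (S : Finset (Fin K)) : ℝ :=
  ∑ k ∈ S, -Real.log (softmax z k)

/-- The family of label sets `S ⊆ [K]` with `|S| = m`. -/
def msets (K m : ℕ) : Finset (Finset (Fin K)) := Finset.univ.powersetCard m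

/-- Total sample count `N = ∑_{m=1}^M ∑_{|S|=m} r_{m,S}`. -/
def totalN (K M : ℕ) (r : ℕ → Finset (Fin K) → ℕ) : ℕ :=
  ∑ m ∈ Finset.Icc 1 M, ∑ S ∈ msets K m, r m S

/-- Empirical PAL risk `g(WH)`. -/
noncomputable def empRisk (K d M : ℕ) (r : ℕ → Finset (Fin K) → ℕ)
    (W : Fin K → Fin d → ℝ) (h : ℕ → Finset (Fin K) → ℕ → Fin d → ℝ) : ℝ :=
  (1 / (totalN K M r : ℝ)) *
    ∑ m ∈ Finset.Icc 1 M, ∑ S ∈ msets K m, ∑ i ∈ Finset.range (r m S),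
      palLoss (fun k => ∑ t, W k t * h m S i t) S

/-- Squared Frobenius norm `‖W‖_F²`. -/
noncomputable def wNormSq (K d : ℕ) (W : Fin K → Fin d → ℝ) : ℝ :=
  ∑ k, ∑ t, (W k t) ^ 2

/-- Squared feature norm `‖H‖_F² = ∑_{m,S,i} ‖h_{m,S,i}‖²`. -/
noncomputable def hNormSq (K d M : ℕ) (r : ℕ → Finset (Fin K) → ℕ)
    (h : ℕ → Finset (Fin K) → ℕ → Fin d → ℝ) : ℝ :=
  ∑ m ∈ Finset.Icc 1 M, ∑ S ∈ msets K m, ∑ i ∈ Finset.range (r m S), ∑ t, (h m S i t) ^ 2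

/-- Regularized objective `f(W,H) = g(WH) + (λ_W/2)‖W‖_F² + (λ_H/2)‖H‖_F²`. -/
noncomputable def objective (K d M : ℕ) (r : ℕ → Finset (Fin K) → ℕ) (lW lH : ℝ)
    (W : Fin K → Fin d → ℝ) (h : ℕ → Finset (Fin K) → ℕ → Fin d → ℝ) : ℝ :=
  empRisk K d M r W h + lW / 2 * wNormSq K d W + lH / 2 * hNormSq K d M r h
/-- Group-wise total count `N_m = ∑_{|S|=m} r_{m,S}`. -/
def groupN (K m : ℕ) (rm : Finset (Fin K) → ℕ) : ℕ := ∑ S ∈ msets K m, rm S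

/-- Group-wise class count `N_m^j = ∑_{|S|=m, j∈S} r_{m,S}`. -/
def classN (K m : ℕ) (rm : Finset (Fin K) → ℕ) (j : Fin K) : ℕ :=
  ∑ S ∈ (msets K m).filter (fun S => j ∈ S), rm S

/-- Label second-moment matrix
`G_m(a,b) = ∑_{|S|=m} (r_{m,S}/N_m) 1_S(a) 1_S(b)`. -/
noncomputable def Gmat (K m : ℕ) (rm : Finset (Fin K) → ℕ) (a b : Fin K) : ℝ :=
  ∑ S ∈ msets K m, ((rm S : ℝ) / (groupN K m rm : ℝ)) *
    (if a ∈ S then 1 else 0) * (if b ∈ S then 1 else 0)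

/-- The constant `c_{2,m}` from the affine PAL lower bound, for tuning
constant `c = c_{1,m}`. -/
noncomputable def c2const (K m : ℕ) (c : ℝ) : ℝ :=
  (c * m / (c + 1)) * Real.log m + ((m : ℝ) * c / (1 + c)) * Real.log ((c + 1) / c)
    + ((m : ℝ) / (c + 1)) * Real.log (((K : ℝ) - m) * (c + 1))

/-- Worst-set rarity term `max_{|S|=m} ∑_{j∈S} 1/N_m^j`. -/
noncomputable def maxRare (K m : ℕ) (rm : Finset (Fin K) → ℕ) : ℝ :=
  sSup ((fun S => ∑ j ∈ S, (1 : ℝ) / (classN K m rm j)) '' ↑(msets K m))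

/-- The control quantity
`A_m = sqrt((1/κ_m)·(m(K−m)/K)·[2K/N_m + (2K²/m²)·max_{|S|=m} ∑_{j∈S} 1/N_m^j])`. -/
noncomputable def Aconst (K m : ℕ) (rm : Finset (Fin K) → ℕ) (κm : ℝ) : ℝ :=
  Real.sqrt ((1 / κm) * ((m : ℝ) * ((K : ℝ) - m) / K) *
    (2 * K / (groupN K m rm : ℝ) + (2 * (K : ℝ) ^ 2 / (m : ℝ) ^ 2) * maxRare K m rm))

lemma sum_exp_pos {K : ℕ} [NeZero K] (z : Fin K → ℝ) : 0 < ∑ j, Real.exp (z j) :=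
  Finset.sum_pos (fun j _ => Real.exp_pos _) ⟨⟨0, Nat.pos_of_ne_zero (NeZero.ne K)⟩, Finset.mem_univ _⟩

lemma palLoss_eq {K : ℕ} [NeZero K] (z : Fin K → ℝ) (S : Finset (Fin K)) :
    palLoss z S = (S.card : ℝ) * Real.log (∑ j, Real.exp (z j)) - ∑ k ∈ S, z k := by
  have hT := sum_exp_pos z
  unfold palLoss softmax
  have : ∀ k ∈ S, -Real.log (Real.exp (z k) / ∑ j, Real.exp (z j))
      = Real.log (∑ j, Real.exp (z j)) - z k := by
    intro k _
    rw [Real.log_div (Real.exp_ne_zero _) hT.ne', Real.log_exp]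
    ring
  rw [Finset.sum_congr rfl this, Finset.sum_sub_distrib, Finset.sum_const, nsmul_eq_mul]

/-- AM-GM: average of exponentials ≥ exponential of average. -/

lemma card_mul_exp_avg_le {α : Type*} [DecidableEq α] (T : Finset α) (hT : T.Nonempty) (z : α → ℝ) :
    (T.card : ℝ) * Real.exp ((∑ j ∈ T, z j) / T.card) ≤ ∑ j ∈ T, Real.exp (z j) := by
  have hn : (0:ℝ) < T.card := by exact_mod_cast Finset.card_pos.2 hT
  have h := Real.geom_mean_le_arith_mean_weighted T (fun _ => 1 / (T.card:ℝ))
    (fun j => Real.exp (z j)) (fun i _ => by positivity)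
    (by rw [Finset.sum_const, nsmul_eq_mul]; field_simp)
    (fun i _ => (Real.exp_pos _).le)
  have hprod : ∏ i ∈ T, (Real.exp (z i)) ^ ((1:ℝ) / T.card)
      = Real.exp ((∑ j ∈ T, z j) / T.card) := by
    simp_rw [← Real.exp_mul]
    rw [← Real.exp_sum]
    congr 1
    rw [Finset.sum_div]
    exact Finset.sum_congr rfl (fun i _ => by ring)
  rw [hprod] at h
  have hsum : ∑ i ∈ T, 1 / (T.card:ℝ) * Real.exp (z i) = (∑ j ∈ T, Real.exp (z j)) / T.card := by
    rw [← Finset.mul_sum]; ring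
  rw [hsum] at h
  rw [mul_comm]
  exact (le_div_iff₀ hn).mp h

/-- Key scalar inequality: `exp(t/(1+c)) * (1+c) ≤ c + exp t`. -/

lemma scalar_amgm (c t : ℝ) (hc : 0 < c) :
    Real.exp (t / (1 + c)) * (1 + c) ≤ c + Real.exp t := by
  have h1c : (0:ℝ) < 1 + c := by linarith
  have h := Real.geom_mean_le_arith_mean2_weighted
    (w₁ := c / (1 + c)) (w₂ := 1 / (1 + c)) (p₁ := 1) (p₂ := Real.exp t)
    (by positivity) (by positivity) zero_le_one (Real.exp_pos t).le (by field_simp; ring)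
  rw [Real.one_rpow, one_mul, ← Real.exp_mul] at h
  have : Real.exp (t * (1 / (1 + c))) = Real.exp (t / (1 + c)) := by ring_nf
  rw [this] at h
  rw [← le_div_iff₀ h1c] -- goal: exp(t/(1+c)) ≤ (c + exp t)/(1+c)
  calc Real.exp (t / (1+c)) ≤ c/(1+c)*1 + 1/(1+c)*Real.exp t := h
    _ = (c + Real.exp t)/(1+c) := by ring

/-- Log form: `t/(1+c) + log(1+c) ≤ log (c + exp t)`. -/

lemma scalar_log (c t : ℝ) (hc : 0 < c) :
    t / (1 + c) + Real.log (1 + c) ≤ Real.log (c + Real.exp t) := by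
  have h1c : (0:ℝ) < 1 + c := by linarith
  have h := scalar_amgm c t hc
  have hpos : (0:ℝ) < Real.exp (t / (1 + c)) * (1 + c) := by positivity
  calc t / (1 + c) + Real.log (1 + c)
      = Real.log (Real.exp (t / (1 + c)) * (1 + c)) := by
        rw [Real.log_mul (Real.exp_ne_zero _) h1c.ne', Real.log_exp]
    _ ≤ Real.log (c + Real.exp t) := Real.log_le_log hpos h

lemma pal_lower {K : ℕ} (hK : 2 ≤ K) {m : ℕ} (hm1 : 1 ≤ m) (hmK : m + 1 ≤ K)
    {S : Finset (Fin K)} (hS : S.card = m) {c : ℝ} (hc : 0 < c) (z : Fin K → ℝ) :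
    c2const K m c + (1 / (1 + c)) * ((m : ℝ) / ((K : ℝ) - m)) *
      (∑ k, (if k ∈ S then -((((K:ℝ) - m)) / m) else 1) * z k) ≤ palLoss z S := by
  haveI : NeZero K := ⟨by omega⟩
  set km : ℝ := (K : ℝ) - m with hkm
  have hmpos : (0:ℝ) < m := by exact_mod_cast hm1
  have hkmpos : (0:ℝ) < km := by
    have : (m:ℝ) + 1 ≤ K := by exact_mod_cast hmK
    rw [hkm]; linarith
  have h1c : (0:ℝ) < 1 + c := by linarith
  set s := ∑ k ∈ S, z k with hs
  set t := ∑ k ∈ Sᶜ, z k with ht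
  have hlin : (∑ k, (if k ∈ S then -(km / m) else 1) * z k) = t - (km/m) * s := by
    rw [← Finset.sum_add_sum_compl S]
    have h1 : ∑ k ∈ S, (if k ∈ S then -(km/m) else 1) * z k = -((km/m) * s) := by
      rw [hs, neg_mul_eq_neg_mul, Finset.mul_sum]
      exact Finset.sum_congr rfl (fun k hk => by rw [if_pos hk])
    have h2 : ∑ k ∈ Sᶜ, (if k ∈ S then -(km/m) else 1) * z k = t := by
      rw [ht]
      exact Finset.sum_congr rfl (fun k hk => by
        rw [if_neg (Finset.mem_compl.mp hk), one_mul])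
    rw [h1, h2]; ring
  have hSne : S.Nonempty := Finset.card_pos.mp (by omega)
  have hCc : (Sᶜ : Finset (Fin K)).card = K - m := by
    rw [Finset.card_compl, hS, Fintype.card_fin]
  have hCcR : (((Sᶜ : Finset (Fin K)).card : ℕ) : ℝ) = km := by
    rw [hCc, Nat.cast_sub (by omega), hkm]
  have hScne : (Sᶜ : Finset (Fin K)).Nonempty := Finset.card_pos.mp (by omega)
  have ha : (m:ℝ) * Real.exp (s / m) ≤ ∑ k ∈ S, Real.exp (z k) := by
    have := card_mul_exp_avg_le S hSne z
    rwa [hS, ← hs] at this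
  have hb : km * Real.exp (t / km) ≤ ∑ k ∈ Sᶜ, Real.exp (z k) := by
    have := card_mul_exp_avg_le Sᶜ hScne z
    rwa [hCcR, ← ht] at this
  have hT : palLoss z S = (m:ℝ) * Real.log (∑ j, Real.exp (z j)) - s := by
    rw [palLoss_eq, hS, hs]
  set u' := t/km - s/m + Real.log (km/m) with hu'
  have e1 : Real.exp u' = Real.exp (t/km - s/m) * (km/m) := by
    rw [hu', Real.exp_add, Real.exp_log (by positivity)]
  have e2 : Real.exp (s/m) * ((m:ℝ) * Real.exp u') = km * Real.exp (t/km) := by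
    calc Real.exp (s/m) * ((m:ℝ) * Real.exp u')
        = (Real.exp (s/m) * Real.exp (t/km - s/m)) * ((m:ℝ) * (km/m)) := by rw [e1]; ring
      _ = Real.exp (t/km) * km := by
          rw [← Real.exp_add, show s/m + (t/km - s/m) = t/km from by ring,
            show (m:ℝ) * (km/m) = km from by field_simp]
      _ = km * Real.exp (t/km) := mul_comm _ _
  have hab : (m:ℝ) * Real.exp (s/m) + km * Real.exp (t/km) ≤ ∑ j, Real.exp (z j) := by
    rw [← Finset.sum_add_sum_compl S]
    exact add_le_add ha hb
  have hfac : (m:ℝ) * Real.exp (s/m) + km * Real.exp (t/km)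
      = Real.exp (s/m) * ((m:ℝ) * (1 + Real.exp u')) := by
    calc (m:ℝ) * Real.exp (s/m) + km * Real.exp (t/km)
        = Real.exp (s/m) * (m:ℝ) + Real.exp (s/m) * ((m:ℝ) * Real.exp u') := by rw [e2]; ring
      _ = Real.exp (s/m) * ((m:ℝ) * (1 + Real.exp u')) := by ring
  have hlog1 : s/m + (Real.log m + Real.log (1 + Real.exp u'))
      ≤ Real.log (∑ j, Real.exp (z j)) := by
    have hpos : (0:ℝ) < Real.exp (s/m) * ((m:ℝ) * (1 + Real.exp u')) := by positivity
    have hlog := Real.log_le_log hpos (hfac ▸ hab)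
    rwa [Real.log_mul (Real.exp_ne_zero _) (by positivity), Real.log_exp,
      Real.log_mul hmpos.ne' (by positivity)] at hlog
  have hsc : (u' + Real.log c)/(1+c) + Real.log (1+c) - Real.log c
      ≤ Real.log (1 + Real.exp u') := by
    have hscal := scalar_log c (u' + Real.log c) hc
    have he : c + Real.exp (u' + Real.log c) = c * (1 + Real.exp u') := by
      rw [Real.exp_add, Real.exp_log hc]; ring
    rw [he, Real.log_mul hc.ne' (by positivity)] at hscal
    linarith
  have hl3 : Real.log (km/m) = Real.log km - Real.log m := Real.log_div hkmpos.ne' hmpos.ne'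
  have hident : c2const K m c + (1/(1+c)) * ((m:ℝ)/km) * (t - (km/m)*s)
      = (m:ℝ) * Real.log m
        + (m:ℝ) * ((u' + Real.log c)/(1+c) + Real.log (1+c) - Real.log c) := by
    have hl1 : Real.log ((c+1)/c) = Real.log (c+1) - Real.log c :=
      Real.log_div (by linarith) hc.ne'
    have hl2 : Real.log (km * (c+1)) = Real.log km + Real.log (c+1) :=
      Real.log_mul hkmpos.ne' (by linarith)
    have hl4 : Real.log (c+1) = Real.log (1+c) := by ring_nf
    simp only [c2const, ← hkm]
    rw [hl1, hl2, hl4, hu', hl3]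
    field_simp
    ring
  rw [hlin, hT, hident]
  have A' : (m:ℝ) * (s/m + (Real.log m + Real.log (1 + Real.exp u')))
      = s + ((m:ℝ)*Real.log m + (m:ℝ)*Real.log (1 + Real.exp u')) := by
    field_simp
  have A := mul_le_mul_of_nonneg_left hlog1 hmpos.le
  rw [A'] at A
  have B := mul_le_mul_of_nonneg_left hsc hmpos.le
  linarith

lemma hasDerivAt_palterm {K d : ℕ} [NeZero K] (W : Fin K → Fin d → ℝ) (hv : Fin d → ℝ)
    (S : Finset (Fin K)) :
    HasDerivAt (fun s : ℝ =>
      palLoss (fun k => ∑ t, (W k t + s * W k t) * (hv t + s * -(hv t))) S) 0 0 := by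
  have hL : ∀ k : Fin K, HasDerivAt
      (fun s : ℝ => ∑ t, (W k t + s * W k t) * (hv t + s * -(hv t))) 0 0 := by
    intro k
    have h1 : ∀ t : Fin d, HasDerivAt
        (fun s : ℝ => (W k t + s * W k t) * (hv t + s * -(hv t)))
        ((1 * W k t) * (hv t + 0 * -(hv t)) + (W k t + 0 * W k t) * (1 * -(hv t))) 0 :=
      fun t => (((hasDerivAt_id (0:ℝ)).mul_const (W k t)).const_add (W k t)).mul
        (((hasDerivAt_id (0:ℝ)).mul_const (-(hv t))).const_add (hv t))
    have h2 := HasDerivAt.fun_sum (fun t (_ : t ∈ (Finset.univ : Finset (Fin d))) => h1 t)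
    simpa using h2
  have hsum : HasDerivAt (fun s : ℝ => ∑ j, Real.exp
      (∑ t, (W j t + s * W j t) * (hv t + s * -(hv t)))) 0 0 := by
    have h3 := HasDerivAt.fun_sum
      (fun j (_ : j ∈ (Finset.univ : Finset (Fin K))) => ((hL j).exp))
    simpa using h3
  have hTpos : (0:ℝ) < ∑ j, Real.exp (∑ t, (W j t + (0:ℝ) * W j t) * (hv t + (0:ℝ) * -(hv t))) :=
    sum_exp_pos _
  have hlog := (hsum.log hTpos.ne').const_mul (S.card : ℝ)
  have hlin := HasDerivAt.fun_sum (fun k (_ : k ∈ S) => hL k)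
  have h4 := hlog.fun_sub hlin
  have hfun : (fun s : ℝ =>
      palLoss (fun k => ∑ t, (W k t + s * W k t) * (hv t + s * -(hv t))) S)
      = fun s : ℝ => (S.card : ℝ) * Real.log (∑ j, Real.exp
          (∑ t, (W j t + s * W j t) * (hv t + s * -(hv t))))
        - ∑ k ∈ S, ∑ t, (W k t + s * W k t) * (hv t + s * -(hv t)) := by
    funext s; rw [palLoss_eq]
  rw [hfun]
  simpa using h4

lemma balanced_eq {K d M : ℕ} [NeZero K] (r : ℕ → Finset (Fin K) → ℕ) (lW lH : ℝ)
    (W : Fin K → Fin d → ℝ) (h : ℕ → Finset (Fin K) → ℕ → Fin d → ℝ)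
    (hcrit : deriv (fun s : ℝ => objective K d M r lW lH
      (fun k t => W k t + s * W k t)
      (fun m S i t => h m S i t + s * -(h m S i t))) 0 = 0) :
    lW * wNormSq K d W = lH * hNormSq K d M r h := by
  have hE : HasDerivAt (fun s : ℝ => empRisk K d M r
      (fun k t => W k t + s * W k t) (fun m S i t => h m S i t + s * -(h m S i t))) 0 0 := by
    simp only [empRisk]
    have h5 := HasDerivAt.const_mul (1 / (totalN K M r : ℝ))
      (HasDerivAt.fun_sum (fun m (_ : m ∈ Finset.Icc 1 M) =>
        HasDerivAt.fun_sum (fun S (_ : S ∈ msets K m) =>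
          HasDerivAt.fun_sum (fun i (_ : i ∈ Finset.range (r m S)) =>
            hasDerivAt_palterm W (h m S i) S))))
    simpa using h5
  have hWn : HasDerivAt (fun s : ℝ => wNormSq K d (fun k t => W k t + s * W k t))
      (2 * wNormSq K d W) 0 := by
    simp only [wNormSq]
    have h6 := HasDerivAt.fun_sum (fun k (_ : k ∈ (Finset.univ : Finset (Fin K))) =>
      HasDerivAt.fun_sum (fun t (_ : t ∈ (Finset.univ : Finset (Fin d))) =>
        ((((hasDerivAt_id (0:ℝ)).mul_const (W k t)).const_add (W k t)).fun_pow 2)))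
    refine h6.congr_deriv ?_
    symm
    simp [Finset.mul_sum]
    exact Finset.sum_congr rfl fun _ _ => Finset.sum_congr rfl fun _ _ => by ring
  have hHn : HasDerivAt (fun s : ℝ => hNormSq K d M r
      (fun m S i t => h m S i t + s * -(h m S i t)))
      (-(2 * hNormSq K d M r h)) 0 := by
    simp only [hNormSq]
    have h7 := HasDerivAt.fun_sum (fun m (_ : m ∈ Finset.Icc 1 M) =>
      HasDerivAt.fun_sum (fun S (_ : S ∈ msets K m) =>
        HasDerivAt.fun_sum (fun i (_ : i ∈ Finset.range (r m S)) =>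
          HasDerivAt.fun_sum (fun t (_ : t ∈ (Finset.univ : Finset (Fin d))) =>
            ((((hasDerivAt_id (0:ℝ)).mul_const (-(h m S i t))).const_add (h m S i t)).fun_pow 2)))))
    refine h7.congr_deriv ?_
    symm
    simp [Finset.mul_sum, neg_eq_iff_eq_neg, ← Finset.sum_neg_distrib]
    refine Finset.sum_congr rfl fun m _ => Finset.sum_congr rfl fun S _ =>
      Finset.sum_congr rfl fun i _ => Finset.sum_congr rfl fun t _ => by ring
  have hobj := (hE.add (hWn.const_mul (lW / 2))).add (hHn.const_mul (lH / 2))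
  have hd2 : deriv (fun s : ℝ => objective K d M r lW lH
      (fun k t => W k t + s * W k t)
      (fun m S i t => h m S i t + s * -(h m S i t))) 0
      = 0 + lW / 2 * (2 * wNormSq K d W) + lH / 2 * (-(2 * hNormSq K d M r h)) := hobj.deriv
  rw [hcrit] at hd2
  linarith

lemma card_of_mem_msets {K m : ℕ} {S : Finset (Fin K)} (h : S ∈ msets K m) : S.card = m :=
  (Finset.mem_powersetCard.mp h).2

lemma sum_w_eq_one {K m : ℕ} (rm : Finset (Fin K) → ℕ) (h : 0 < groupN K m rm) :
    ∑ S ∈ msets K m, ((rm S : ℝ) / (groupN K m rm : ℝ)) = 1 := by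
  rw [← Finset.sum_div]
  have h1 : ∑ S ∈ msets K m, ((rm S : ℝ)) = (groupN K m rm : ℝ) := by
    rw [groupN]; push_cast; rfl
  rw [h1, div_self (by exact_mod_cast h.ne')]

lemma quadform (K m : ℕ) (rm : Finset (Fin K) → ℕ) (x : Fin K → ℝ) :
    ∑ a, ∑ b, x a * Gmat K m rm a b * x b
      = ∑ S ∈ msets K m, ((rm S : ℝ) / (groupN K m rm : ℝ)) * (∑ a ∈ S, x a)^2 := by
  have h1 : ∀ S : Finset (Fin K), (∑ a, x a * (if a ∈ S then (1:ℝ) else 0)) = ∑ a ∈ S, x a := by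
    intro S
    simp [mul_ite, mul_one, mul_zero, Finset.sum_ite_mem]
  simp only [Gmat, Finset.mul_sum, Finset.sum_mul]
  conv_lhs => enter [2, a]; rw [Finset.sum_comm]
  rw [Finset.sum_comm]
  refine Finset.sum_congr rfl fun S _ => ?_
  set w : ℝ := (rm S : ℝ) / (groupN K m rm : ℝ) with hw
  calc ∑ a, ∑ b, x a * ((w * if a ∈ S then (1:ℝ) else 0) * if b ∈ S then (1:ℝ) else 0) * x b
      = ∑ a, (x a * if a ∈ S then (1:ℝ) else 0) *
          (w * ∑ b, x b * if b ∈ S then (1:ℝ) else 0) := by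
        refine Finset.sum_congr rfl fun a _ => ?_
        rw [Finset.mul_sum, Finset.mul_sum]
        exact Finset.sum_congr rfl fun b _ => by ring
    _ = (∑ a, x a * if a ∈ S then (1:ℝ) else 0) *
          (w * ∑ b, x b * if b ∈ S then (1:ℝ) else 0) := by rw [Finset.sum_mul]
    _ = w * (∑ a ∈ S, x a)^2 := by rw [h1]; ring

lemma kappa_le {K m : ℕ} (hK : 2 ≤ K) (hm1 : 1 ≤ m) (hmK : m + 1 ≤ K)
    (rm : Finset (Fin K) → ℕ) (hNm : 0 < groupN K m rm) {κ : ℝ}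
    (hmem : ∀ x : Fin K → ℝ, (∑ k, x k) = 0 →
      κ * (∑ k, (x k)^2) ≤ ∑ a, ∑ b, x a * Gmat K m rm a b * x b) :
    κ * ((K:ℝ) - 1) ≤ (m:ℝ) * ((K:ℝ) - m) / K := by
  have hKpos : (0:ℝ) < K := by positivity
  have hKne : (K:ℝ) ≠ 0 := hKpos.ne'
  set N : ℝ := (groupN K m rm : ℝ) with hN
  have key : ∀ j : Fin K, κ * (((K:ℝ)-1)/K) ≤ ∑ S ∈ msets K m,
      ((rm S:ℝ)/N) * ((if j ∈ S then (1:ℝ) else 0) - m/K)^2 := by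
    intro j
    have hc : (∑ k, ((if k = j then (1:ℝ) else 0) - 1/K)) = 0 := by
      rw [Finset.sum_sub_distrib, Finset.sum_ite_eq' Finset.univ j (fun _ => (1:ℝ)),
        Finset.sum_const, Finset.card_univ, Fintype.card_fin, nsmul_eq_mul]
      simp [hKne]
    have h2 := hmem _ hc
    rw [quadform] at h2
    have hsq : ∑ k, ((if k = j then (1:ℝ) else 0) - 1/K)^2 = ((K:ℝ)-1)/K := by
      have expand : ∀ k : Fin K, ((if k = j then (1:ℝ) else 0) - 1/K)^2
          = (if k = j then (1:ℝ) else 0) * (1 - 2/K) + (1/K)^2 := by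
        intro k; split_ifs <;> ring
      rw [Finset.sum_congr rfl (fun k _ => expand k), Finset.sum_add_distrib,
        ← Finset.sum_mul, Finset.sum_ite_eq' Finset.univ j (fun _ => (1:ℝ)),
        Finset.sum_const, Finset.card_univ, Fintype.card_fin, nsmul_eq_mul]
      simp only [Finset.mem_univ, if_true]
      field_simp
      ring
    have hin : ∀ S ∈ msets K m, (∑ a ∈ S, ((if a = j then (1:ℝ) else 0) - 1/K))
        = (if j ∈ S then (1:ℝ) else 0) - m/K := by
      intro S hS
      rw [Finset.sum_sub_distrib, Finset.sum_ite_eq' S j (fun _ => (1:ℝ)),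
        Finset.sum_const, card_of_mem_msets hS, nsmul_eq_mul]
      ring
    rw [hsq] at h2
    calc κ * (((K:ℝ)-1)/K) ≤ _ := h2
      _ = ∑ S ∈ msets K m, ((rm S:ℝ)/N) * ((if j ∈ S then (1:ℝ) else 0) - m/K)^2 :=
        Finset.sum_congr rfl fun S hS => by rw [hin S hS]
  have hsumj := Finset.sum_le_sum (fun j (_ : j ∈ (Finset.univ : Finset (Fin K))) => key j)
  rw [Finset.sum_const, Finset.card_univ, Fintype.card_fin, nsmul_eq_mul,
    Finset.sum_comm] at hsumj
  have hRHS : ∑ S ∈ msets K m, ∑ j, ((rm S:ℝ)/N) * ((if j ∈ S then (1:ℝ) else 0) - m/K)^2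
      = (m:ℝ) - m^2/K := by
    have hper : ∀ S ∈ msets K m, ∑ j, ((rm S:ℝ)/N) * ((if j ∈ S then (1:ℝ) else 0) - m/K)^2
        = ((rm S:ℝ)/N) * ((m:ℝ) - m^2/K) := by
      intro S hS
      rw [← Finset.mul_sum]
      congr 1
      have expand : ∀ j : Fin K, ((if j ∈ S then (1:ℝ) else 0) - m/K)^2
          = (if j ∈ S then (1:ℝ) else 0) * (1 - 2*m/K) + (m/K)^2 := by
        intro j; split_ifs <;> ring
      rw [Finset.sum_congr rfl (fun j _ => expand j), Finset.sum_add_distrib,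
        ← Finset.sum_mul]
      have hsc : ∑ j, (if j ∈ S then (1:ℝ) else 0) = (m:ℝ) := by
        rw [Finset.sum_ite_mem, Finset.univ_inter, Finset.sum_const,
          card_of_mem_msets hS, nsmul_eq_mul, mul_one]
      rw [hsc, Finset.sum_const, Finset.card_univ, Fintype.card_fin, nsmul_eq_mul]
      field_simp
      ring
    rw [Finset.sum_congr rfl hper, ← Finset.sum_mul, sum_w_eq_one rm hNm, one_mul]
  rw [hRHS] at hsumj
  have e1 : (K:ℝ) * (κ * (((K:ℝ)-1)/K)) = κ * ((K:ℝ)-1) := by field_simp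
  have e2 : (m:ℝ) - m^2/K = (m:ℝ) * ((K:ℝ) - m) / K := by field_simp
  rw [e1, e2] at hsumj
  exact hsumj

lemma msets_nonempty {K m : ℕ} (h : m ≤ K) : (msets K m).Nonempty := by
  obtain ⟨t, _, ht⟩ := Finset.exists_subset_card_eq (s := (Finset.univ : Finset (Fin K))) (n := m)
    (by simpa using h)
  exact ⟨t, Finset.mem_powersetCard.mpr ⟨Finset.subset_univ t, ht⟩⟩

lemma maxRare_nonneg {K m : ℕ} (h : m ≤ K) (rm : Finset (Fin K) → ℕ) :
    0 ≤ maxRare K m rm := by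
  obtain ⟨S, hS⟩ := msets_nonempty (K := K) (m := m) h
  have hmem : (∑ j ∈ S, (1:ℝ)/(classN K m rm j)) ∈
      ((fun S => ∑ j ∈ S, (1:ℝ)/(classN K m rm j)) '' ↑(msets K m)) :=
    ⟨S, by simpa using hS, rfl⟩
  have hbdd : BddAbove ((fun S => ∑ j ∈ S, (1:ℝ)/(classN K m rm j)) '' ↑(msets K m)) :=
    (Set.Finite.image _ (Finset.finite_toSet _)).bddAbove
  have hle := le_csSup hbdd hmem
  have h0 : 0 ≤ ∑ j ∈ S, (1:ℝ)/(classN K m rm j) :=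
    Finset.sum_nonneg fun j _ => by positivity
  exact le_trans h0 hle

lemma neg_sqrt_le {a b : ℝ} (h : a^2 ≤ b) : -Real.sqrt b ≤ a := by
  have h1 : |a| ≤ Real.sqrt b := by
    rw [← Real.sqrt_sq_eq_abs]; exact Real.sqrt_le_sqrt h
  have h2 := abs_le.mp h1
  linarith [h2.1]

lemma cs_bound {K d : ℕ} (W : Fin K → Fin d → ℝ) (hv : Fin d → ℝ) (v : Fin K → ℝ) :
    -Real.sqrt ((∑ k, (v k)^2) * wNormSq K d W * (∑ t, (hv t)^2))
      ≤ ∑ k, v k * (∑ t, W k t * hv t) := by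
  apply neg_sqrt_le
  have hswap : ∑ k, v k * (∑ t, W k t * hv t) = ∑ t, (∑ k, v k * W k t) * hv t := by
    simp_rw [Finset.mul_sum, Finset.sum_mul]
    rw [Finset.sum_comm]
    exact Finset.sum_congr rfl fun t _ => Finset.sum_congr rfl fun k _ => by ring
  rw [hswap]
  have h1 : (∑ t, (∑ k, v k * W k t) * hv t)^2
      ≤ (∑ t, (∑ k, v k * W k t)^2) * (∑ t, (hv t)^2) :=
    Finset.sum_mul_sq_le_sq_mul_sq _ _ _
  have h2 : (∑ t, (∑ k, v k * W k t)^2) ≤ (∑ k, (v k)^2) * wNormSq K d W := by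
    calc (∑ t, (∑ k, v k * W k t)^2)
        ≤ ∑ t, (∑ k, (v k)^2) * (∑ k, (W k t)^2) :=
          Finset.sum_le_sum fun t _ => Finset.sum_mul_sq_le_sq_mul_sq _ _ _
      _ = (∑ k, (v k)^2) * wNormSq K d W := by
          rw [← Finset.mul_sum, wNormSq, Finset.sum_comm]
  calc (∑ t, (∑ k, v k * W k t) * hv t)^2 ≤ _ := h1
    _ ≤ ((∑ k, (v k)^2) * wNormSq K d W) * (∑ t, (hv t)^2) :=
        mul_le_mul_of_nonneg_right h2 (Finset.sum_nonneg fun t _ => sq_nonneg _)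

lemma group_sqrt_sum {K : ℕ} {m : ℕ} (rm : Finset (Fin K) → ℕ)
    (σ : Finset (Fin K) → ℕ → ℝ) (hσ : ∀ S i, 0 ≤ σ S i) :
    ∑ S ∈ msets K m, ∑ i ∈ Finset.range (rm S), Real.sqrt (σ S i)
      ≤ Real.sqrt (groupN K m rm) *
        Real.sqrt (∑ S ∈ msets K m, ∑ i ∈ Finset.range (rm S), σ S i) := by
  set P := (msets K m).sigma (fun S => Finset.range (rm S)) with hP
  have h1 : ∑ S ∈ msets K m, ∑ i ∈ Finset.range (rm S), Real.sqrt (σ S i)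
      = ∑ p ∈ P, Real.sqrt (σ p.1 p.2) :=
    Finset.sum_sigma' (msets K m) (fun S => Finset.range (rm S)) (fun S i => Real.sqrt (σ S i))
  have h2 : ∑ S ∈ msets K m, ∑ i ∈ Finset.range (rm S), σ S i = ∑ p ∈ P, σ p.1 p.2 :=
    Finset.sum_sigma' (msets K m) (fun S => Finset.range (rm S)) (fun S i => σ S i)
  have hcard : (P.card : ℝ) = (groupN K m rm : ℝ) := by
    rw [hP, Finset.card_sigma]
    simp [groupN]
  have h3 : (∑ p ∈ P, Real.sqrt (σ p.1 p.2))^2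
      ≤ (P.card : ℝ) * ∑ p ∈ P, (Real.sqrt (σ p.1 p.2))^2 :=
    sq_sum_le_card_mul_sum_sq
  have h4 : ∑ p ∈ P, (Real.sqrt (σ p.1 p.2))^2 = ∑ p ∈ P, σ p.1 p.2 :=
    Finset.sum_congr rfl fun p _ => Real.sq_sqrt (hσ _ _)
  rw [h1, h2]
  have h5 : (∑ p ∈ P, Real.sqrt (σ p.1 p.2)) ≤ Real.sqrt ((P.card : ℝ) * ∑ p ∈ P, σ p.1 p.2) := by
    have h7 : (∑ p ∈ P, Real.sqrt (σ p.1 p.2))^2 ≤ (P.card:ℝ) * ∑ p ∈ P, σ p.1 p.2 := by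
      rw [← h4]; exact h3
    have h6 := Real.sqrt_le_sqrt h7
    rwa [Real.sqrt_sq (Finset.sum_nonneg fun p _ => Real.sqrt_nonneg _)] at h6
  calc _ ≤ _ := h5
    _ = Real.sqrt ((P.card : ℝ)) * Real.sqrt (∑ p ∈ P, σ p.1 p.2) :=
        Real.sqrt_mul (by positivity) _
    _ = _ := by rw [hcard]

lemma vsq_eq {K m : ℕ} (hm1 : 1 ≤ m) (hmK : m + 1 ≤ K) (S : Finset (Fin K)) (hS : S.card = m) :
    ∑ k, (if k ∈ S then -(((K:ℝ)-m)/m) else 1)^2 = (K:ℝ)*((K:ℝ)-m)/m := by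
  have hmR : (0:ℝ) < m := by exact_mod_cast hm1
  have expand : ∀ k : Fin K, ((if k ∈ S then -(((K:ℝ)-m)/m) else 1))^2
      = (if k ∈ S then ((((K:ℝ)-m)/m)^2 - 1) else 0) + 1 := by
    intro k; split_ifs <;> ring
  rw [Finset.sum_congr rfl fun k _ => expand k, Finset.sum_add_distrib]
  rw [Finset.sum_ite_mem, Finset.univ_inter, Finset.sum_const, hS, Finset.sum_const,
    Finset.card_univ, Fintype.card_fin, nsmul_eq_mul, nsmul_eq_mul, mul_one]
  field_simp
  ring

lemma sqrt_bound {K m : ℕ} (hK : 2 ≤ K) (hm1 : 1 ≤ m) (hmK : m + 1 ≤ K)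
    (rm : Finset (Fin K) → ℕ) (hNm : 0 < groupN K m rm) {κ : ℝ} (hκpos : 0 < κ)
    (hκle : κ * ((K:ℝ) - 1) ≤ (m:ℝ) * ((K:ℝ) - m) / K) :
    Real.sqrt ((groupN K m rm : ℝ) * ((K:ℝ) * ((K:ℝ) - m) / m))
      ≤ (groupN K m rm : ℝ) * Aconst K m rm κ := by
  set N : ℝ := (groupN K m rm : ℝ) with hNdef
  have hN1 : (1:ℝ) ≤ N := by
    rw [hNdef]; exact_mod_cast hNm
  have hN0 : (0:ℝ) < N := by linarith
  have hmR : (1:ℝ) ≤ m := by exact_mod_cast hm1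
  have hmR0 : (0:ℝ) < m := by linarith
  have hkm : (1:ℝ) ≤ (K:ℝ) - m := by
    have : (m:ℝ) + 1 ≤ K := by exact_mod_cast hmK
    linarith
  have hKR : (2:ℝ) ≤ K := by exact_mod_cast hK
  have hK0 : (0:ℝ) < K := by linarith
  have hE : 0 ≤ (2*(K:ℝ)^2/(m:ℝ)^2) * maxRare K m rm :=
    mul_nonneg (by positivity) (maxRare_nonneg (by omega) rm)
  set X := (1/κ) * ((m:ℝ) * ((K:ℝ) - m) / K) *
    (2 * K / N + (2*(K:ℝ)^2/(m:ℝ)^2) * maxRare K m rm) with hX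
  have hXlb : (1/κ) * ((m:ℝ) * ((K:ℝ) - m) / K) * (2 * K / N) ≤ X := by
    rw [hX]
    exact mul_le_mul_of_nonneg_left (by linarith) (by positivity)
  have t1 : κ*((K:ℝ)-1)*K ≤ (m:ℝ)*((K:ℝ)-m) := by
    have ht := mul_le_mul_of_nonneg_right hκle hK0.le
    calc κ*((K:ℝ)-1)*K ≤ ((m:ℝ)*((K:ℝ)-m)/K)*K := ht
      _ = (m:ℝ)*((K:ℝ)-m) := by field_simp
  have t2 : (m:ℝ)*((K:ℝ)-m) ≤ (m:ℝ)*((K:ℝ)-1) := by nlinarith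
  have hK1 : (0:ℝ) < (K:ℝ)-1 := by linarith
  have hκK : κ*(K:ℝ) ≤ m := by nlinarith [t1, t2, mul_pos hK1 hK1]
  have step2 : N * ((K:ℝ)*((K:ℝ)-m)/m) ≤ 2*N*((m:ℝ)*((K:ℝ)-m))/κ := by
    rw [show N * ((K:ℝ)*((K:ℝ)-m)/m) = N*(K:ℝ)*((K:ℝ)-m)/m from by ring,
      div_le_div_iff₀ hmR0 hκpos]
    have hh := mul_le_mul_of_nonneg_left hκK
      (mul_nonneg hN0.le (by linarith : (0:ℝ) ≤ (K:ℝ)-m))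
    nlinarith [hh, mul_nonneg (mul_nonneg hN0.le (by linarith : (0:ℝ) ≤ (K:ℝ)-m)) hmR0.le]
  have step1 : N^2 * ((1/κ) * ((m:ℝ)*((K:ℝ)-m)/K) * (2*K/N)) = 2*N*((m:ℝ)*((K:ℝ)-m))/κ := by
    field_simp
  have hmain : N * ((K:ℝ)*((K:ℝ)-m)/m) ≤ N^2 * X := by
    calc N * ((K:ℝ)*((K:ℝ)-m)/m) ≤ 2*N*((m:ℝ)*((K:ℝ)-m))/κ := step2
      _ = N^2 * ((1/κ) * ((m:ℝ)*((K:ℝ)-m)/K) * (2*K/N)) := step1.symm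
      _ ≤ N^2 * X := mul_le_mul_of_nonneg_left hXlb (sq_nonneg N)
  have hfin := Real.sqrt_le_sqrt hmain
  rwa [show N^2 * X = N^2 * X from rfl, Real.sqrt_mul (sq_nonneg N),
    Real.sqrt_sq hN0.le] at hfin

/-- Let `(W,H)` be a critical point of the regularized objective `f`
(all directional derivatives vanish). Assume `N_m > 0`, `N_m^j > 0`, and `κ_m > 0`
(with `κ_m` the largest constant with `xᵀG_mx ≥ κ_m‖x‖²` on centered `x`) for every
`m ∈ {1,…,M}` and `j ∈ [K]`; fix any `c_{1,m} > 0`. Then, with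
`γ_{1,m} = (1/(1+c_{1,m}))·m/(K−m)`, `Γ₂ = (1/N)∑_m N_m c_{2,m}`, and `ρ = ‖W‖_F²`,
`g(WH) − Γ₂ ≥ −(1/N) ∑_{m=1}^M N_m γ_{1,m} A_m √(λ_W/λ_H) ρ`. -/
theorem spectral_lower_bound {K d M : ℕ} (hK : 2 ≤ K) (hd : 1 ≤ d)
    (hM1 : 1 ≤ M) (hMK : M ≤ K - 1)
    (r : ℕ → Finset (Fin K) → ℕ)
    (hNm : ∀ m ∈ Finset.Icc 1 M, 0 < groupN K m (r m))
    (hNmj : ∀ m ∈ Finset.Icc 1 M, ∀ j : Fin K, 0 < classN K m (r m) j)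
    (lW lH : ℝ) (hlW : 0 < lW) (hlH : 0 < lH)
    (W : Fin K → Fin d → ℝ) (h : ℕ → Finset (Fin K) → ℕ → Fin d → ℝ)
    (hcrit : ∀ (ΔW : Fin K → Fin d → ℝ) (Δh : ℕ → Finset (Fin K) → ℕ → Fin d → ℝ),
      deriv (fun s : ℝ => objective K d M r lW lH
        (fun k t => W k t + s * ΔW k t)
        (fun m S i t => h m S i t + s * Δh m S i t)) 0 = 0)
    (κ : ℕ → ℝ) (hκpos : ∀ m ∈ Finset.Icc 1 M, 0 < κ m)
    (hκ : ∀ m ∈ Finset.Icc 1 M,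
      IsGreatest {c : ℝ | ∀ x : Fin K → ℝ, (∑ k, x k) = 0 →
        c * (∑ k, (x k) ^ 2) ≤ ∑ a : Fin K, ∑ b : Fin K, x a * Gmat K m (r m) a b * x b}
        (κ m))
    (c1 : ℕ → ℝ) (hc1 : ∀ m ∈ Finset.Icc 1 M, 0 < c1 m) :
    empRisk K d M r W h
        - (1 / (totalN K M r : ℝ)) *
            (∑ m ∈ Finset.Icc 1 M, (groupN K m (r m) : ℝ) * c2const K m (c1 m))
      ≥ -((1 / (totalN K M r : ℝ)) *
          ∑ m ∈ Finset.Icc 1 M,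
            (groupN K m (r m) : ℝ) * ((1 / (1 + c1 m)) * ((m : ℝ) / ((K : ℝ) - m)))
              * Aconst K m (r m) (κ m) * Real.sqrt (lW / lH) * wNormSq K d W) := by
  haveI : NeZero K := ⟨by omega⟩
  have h1M : 1 ∈ Finset.Icc 1 M := by simp [hM1]
  have hNn0 : 0 < totalN K M r := by
    have h2 := hNm 1 h1M
    have h3 : groupN K 1 (r 1) ≤ totalN K M r :=
      Finset.single_le_sum (f := fun m => ∑ S ∈ msets K m, r m S)
        (fun _ _ => Nat.zero_le _) h1M
    omega
  have hNR : (0:ℝ) < (totalN K M r : ℝ) := by exact_mod_cast hNn0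
  have hbal : lW * wNormSq K d W = lH * hNormSq K d M r h :=
    balanced_eq r lW lH W h (hcrit W (fun m S i t => -(h m S i t)))
  have hρ0 : 0 ≤ wNormSq K d W :=
    Finset.sum_nonneg fun k _ => Finset.sum_nonneg fun t _ => sq_nonneg _
  have hσρ : hNormSq K d M r h = lW / lH * wNormSq K d W := by
    field_simp
    linarith [hbal]
  have key : ∀ m ∈ Finset.Icc 1 M,
      (groupN K m (r m) : ℝ) * c2const K m (c1 m)
        - (groupN K m (r m) : ℝ) * ((1 / (1 + c1 m)) * ((m : ℝ) / ((K : ℝ) - m)))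
            * Aconst K m (r m) (κ m) * Real.sqrt (lW / lH) * wNormSq K d W
      ≤ ∑ S ∈ msets K m, ∑ i ∈ Finset.range (r m S),
          palLoss (fun k => ∑ t, W k t * h m S i t) S := by
    intro m hm
    obtain ⟨hm1, hmM⟩ := Finset.mem_Icc.mp hm
    have hmK : m + 1 ≤ K := by omega
    have hc := hc1 m hm
    have h1c : (0:ℝ) < 1 + c1 m := by linarith
    have hkmR : (0:ℝ) < (K:ℝ) - m := by
      have : (m:ℝ) + 1 ≤ K := by exact_mod_cast hmK
      linarith
    have hmR : (0:ℝ) < m := by exact_mod_cast hm1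
    have hγ : 0 < (1/(1 + c1 m)) * ((m:ℝ)/((K:ℝ)-m)) := by positivity
    set γ : ℝ := (1/(1 + c1 m)) * ((m:ℝ)/((K:ℝ)-m)) with hγdef
    set ρ : ℝ := wNormSq K d W with hρdef
    set Vq : ℝ := (K:ℝ)*((K:ℝ)-m)/m with hVqdef
    have hVq0 : 0 ≤ Vq := by positivity
    set Nm : ℝ := (groupN K m (r m) : ℝ) with hNmdef
    have hσ : ∀ S i, (0:ℝ) ≤ ∑ t, (h m S i t)^2 :=
      fun S i => Finset.sum_nonneg fun t _ => sq_nonneg _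
    -- per-sample bound
    have hps : ∀ S ∈ msets K m, ∀ i ∈ Finset.range (r m S),
        c2const K m (c1 m)
            - γ * (Real.sqrt (Vq * ρ) * Real.sqrt (∑ t, (h m S i t)^2))
          ≤ palLoss (fun k => ∑ t, W k t * h m S i t) S := by
      intro S hS i _
      have hcard := card_of_mem_msets hS
      have hp := pal_lower hK hm1 hmK hcard hc (fun k => ∑ t, W k t * h m S i t)
      rw [← hγdef] at hp
      have hcs := cs_bound W (h m S i) (fun k => if k ∈ S then -(((K:ℝ)-m)/m) else 1)
      rw [vsq_eq hm1 hmK S hcard] at hcs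
      rw [Real.sqrt_mul (by positivity : (0:ℝ) ≤ Vq * ρ)] at hcs
      have hmul := mul_le_mul_of_nonneg_left hcs hγ.le
      rw [mul_neg] at hmul
      linarith [hp, hmul]
    have hsum1 : ∑ S ∈ msets K m, ∑ i ∈ Finset.range (r m S),
        (c2const K m (c1 m)
          - γ * (Real.sqrt (Vq * ρ) * Real.sqrt (∑ t, (h m S i t)^2)))
        ≤ ∑ S ∈ msets K m, ∑ i ∈ Finset.range (r m S),
            palLoss (fun k => ∑ t, W k t * h m S i t) S :=
      Finset.sum_le_sum fun S hS => Finset.sum_le_sum fun i hi => hps S hS i hi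
    have hLHS : ∑ S ∈ msets K m, ∑ i ∈ Finset.range (r m S),
        (c2const K m (c1 m)
          - γ * (Real.sqrt (Vq * ρ) * Real.sqrt (∑ t, (h m S i t)^2)))
        = Nm * c2const K m (c1 m)
          - γ * Real.sqrt (Vq * ρ) *
            (∑ S ∈ msets K m, ∑ i ∈ Finset.range (r m S), Real.sqrt (∑ t, (h m S i t)^2)) := by
      rw [Finset.sum_congr rfl (fun S _ => Finset.sum_sub_distrib _ _),
        Finset.sum_sub_distrib]
      congr 1
      · rw [Finset.sum_congr rfl (fun S (_ : S ∈ msets K m) => Finset.sum_const (b := c2const K m (c1 m))),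
          hNmdef]
        simp only [Finset.card_range, nsmul_eq_mul]
        rw [← Finset.sum_mul, groupN]
        push_cast
        rfl
      · rw [Finset.mul_sum]
        refine Finset.sum_congr rfl fun S _ => ?_
        rw [Finset.mul_sum]
        exact Finset.sum_congr rfl fun i _ => by ring
    rw [hLHS] at hsum1
    -- bound the sqrt sum
    have hg := group_sqrt_sum (m := m) (r m) (fun S i => ∑ t, (h m S i t)^2) hσ
    have hgrp : ∑ S ∈ msets K m, ∑ i ∈ Finset.range (r m S), (∑ t, (h m S i t)^2)
        ≤ hNormSq K d M r h :=
      Finset.single_le_sum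
        (f := fun m => ∑ S ∈ msets K m, ∑ i ∈ Finset.range (r m S), ∑ t, (h m S i t)^2)
        (fun n _ => Finset.sum_nonneg fun S _ => Finset.sum_nonneg fun i _ =>
          Finset.sum_nonneg fun t _ => sq_nonneg _) hm
    have hsq2 : Real.sqrt (∑ S ∈ msets K m, ∑ i ∈ Finset.range (r m S), (∑ t, (h m S i t)^2))
        ≤ Real.sqrt (lW / lH * ρ) := by
      apply Real.sqrt_le_sqrt
      rw [← hσρ]
      exact hgrp
    have hg2 : ∑ S ∈ msets K m, ∑ i ∈ Finset.range (r m S), Real.sqrt (∑ t, (h m S i t)^2)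
        ≤ Real.sqrt Nm * Real.sqrt (lW / lH * ρ) := by
      calc _ ≤ _ := hg
        _ ≤ Real.sqrt Nm * Real.sqrt (lW / lH * ρ) :=
          mul_le_mul_of_nonneg_left hsq2 (Real.sqrt_nonneg _)
    have hfac : Real.sqrt (Vq * ρ) * (Real.sqrt Nm * Real.sqrt (lW / lH * ρ))
        = (Real.sqrt Nm * Real.sqrt Vq) * Real.sqrt (lW / lH) * ρ := by
      rw [Real.sqrt_mul hVq0, Real.sqrt_mul (by positivity : (0:ℝ) ≤ lW / lH)]
      rw [show Real.sqrt Vq * Real.sqrt ρ * (Real.sqrt Nm * (Real.sqrt (lW/lH) * Real.sqrt ρ))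
        = (Real.sqrt Nm * Real.sqrt Vq) * Real.sqrt (lW/lH) * (Real.sqrt ρ * Real.sqrt ρ) from by ring]
      rw [Real.mul_self_sqrt hρ0]
    have hAb : Real.sqrt Nm * Real.sqrt Vq ≤ Nm * Aconst K m (r m) (κ m) := by
      rw [← Real.sqrt_mul (by positivity : (0:ℝ) ≤ Nm)]
      exact sqrt_bound hK hm1 hmK (r m) (hNm m hm) (hκpos m hm)
        (by
          have hmem := (hκ m hm).1
          exact kappa_le hK hm1 hmK (r m) (hNm m hm) hmem)
        |>.trans_eq rfl
    -- combine
    have hchain : γ * Real.sqrt (Vq * ρ) *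
        (∑ S ∈ msets K m, ∑ i ∈ Finset.range (r m S), Real.sqrt (∑ t, (h m S i t)^2))
        ≤ Nm * γ * Aconst K m (r m) (κ m) * Real.sqrt (lW / lH) * ρ := by
      have s1 : γ * Real.sqrt (Vq * ρ) *
          (∑ S ∈ msets K m, ∑ i ∈ Finset.range (r m S), Real.sqrt (∑ t, (h m S i t)^2))
          ≤ γ * Real.sqrt (Vq * ρ) * (Real.sqrt Nm * Real.sqrt (lW / lH * ρ)) :=
        mul_le_mul_of_nonneg_left hg2 (by positivity)
      have s2 : γ * Real.sqrt (Vq * ρ) * (Real.sqrt Nm * Real.sqrt (lW / lH * ρ))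
          = γ * ((Real.sqrt Nm * Real.sqrt Vq) * Real.sqrt (lW / lH) * ρ) := by
        rw [mul_assoc, hfac]
      have s3 : γ * ((Real.sqrt Nm * Real.sqrt Vq) * Real.sqrt (lW / lH) * ρ)
          ≤ γ * ((Nm * Aconst K m (r m) (κ m)) * Real.sqrt (lW / lH) * ρ) := by
        apply mul_le_mul_of_nonneg_left _ hγ.le
        apply mul_le_mul_of_nonneg_right _ hρ0
        exact mul_le_mul_of_nonneg_right hAb (Real.sqrt_nonneg _)
      calc _ ≤ _ := s1
        _ = _ := s2
        _ ≤ _ := s3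
        _ = Nm * γ * Aconst K m (r m) (κ m) * Real.sqrt (lW / lH) * ρ := by ring
    linarith [hsum1, hchain]
  -- assemble
  have hsumall := Finset.sum_le_sum key
  rw [Finset.sum_sub_distrib] at hsumall
  have hmul := mul_le_mul_of_nonneg_left hsumall (by positivity : (0:ℝ) ≤ 1 / (totalN K M r : ℝ))
  rw [mul_sub] at hmul
  have hER : empRisk K d M r W h = (1 / (totalN K M r : ℝ)) *
      ∑ m ∈ Finset.Icc 1 M, ∑ S ∈ msets K m, ∑ i ∈ Finset.range (r m S),
        palLoss (fun k => ∑ t, W k t * h m S i t) S := rfl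
  rw [← hER] at hmul
  linarith [hmul]
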